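/- Let x₁, x₂ ∈ ℍ be quaternions such that x̄₁x₂ = s − t·i for some real numbers s and t with t ≥ 0. Then the complex 2×2 matrix A(x₁) + √−1·A(x₂) is invertible if and only if x₂ ≠ −x₁·i. Moreover one always has (A(x̄₁) − √−1·A(x̄₂))·(A(x₁) + √−1·A(x₂)) = diag(N(x₁)+N(x₂)+2t, N(x₁)+N(x₂)−2t), and when x₂ ≠ −x₁·i the inverse is given by (A(x₁)+√−1·A(x₂))^{−1} = diag((N(x₁)+N(x₂)+2t)^{−1}, (N(x₁)+N(x₂)−2t)^{−1})·(A(x̄₁) − √−1·A(x̄₂)). -/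

import Mathlib

noncomputable section

/-- The ℝ-algebra embedding `A : ℍ → M₂(ℂ)`. -/
def Amap (q : Quaternion ℝ) : Matrix (Fin 2) (Fin 2) ℂ :=
  !![(q.re : ℂ) + (q.imI : ℂ) * Complex.I, (q.imJ : ℂ) + (q.imK : ℂ) * Complex.I;
     -(q.imJ : ℂ) + (q.imK : ℂ) * Complex.I, (q.re : ℂ) - (q.imI : ℂ) * Complex.I]

/-- Reduced norm `N(x) = x·x̄`. -/
def qN (x : Quaternion ℝ) : ℝ := x.re ^ 2 + x.imI ^ 2 + x.imJ ^ 2 + x.imK ^ 2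

/-- The quaternion unit `i`. -/
def qi : Quaternion ℝ := ⟨0, 1, 0, 0⟩

theorem qi_re : qi.re = 0 := rfl
theorem qi_imI : qi.imI = 1 := rfl
theorem qi_imJ : qi.imJ = 0 := rfl
theorem qi_imK : qi.imK = 0 := rfl

theorem qN_eq (x : Quaternion ℝ) : qN x = Quaternion.normSq x := by
  rw [Quaternion.normSq_def', qN]

theorem qN_nonneg (x : Quaternion ℝ) : 0 ≤ qN x := by
  rw [qN_eq]; exact Quaternion.normSq_nonneg

set_option maxHeartbeats 1000000 in
theorem key_prod (x₁ x₂ : Quaternion ℝ) (s t : ℝ)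
    (h : star x₁ * x₂ = (⟨s, -t, 0, 0⟩ : Quaternion ℝ)) :
    (Amap (star x₁) - Complex.I • Amap (star x₂)) * (Amap x₁ + Complex.I • Amap x₂)
      = Matrix.diagonal ![((qN x₁ + qN x₂ + 2 * t : ℝ) : ℂ), ((qN x₁ + qN x₂ - 2 * t : ℝ) : ℂ)] := by
  replace h := Quaternion.ext_iff.mp h
  obtain ⟨h1, h2, h3, h4⟩ := h
  simp [Quaternion.re_mul, Quaternion.imI_mul, Quaternion.imJ_mul, Quaternion.imK_mul] at h1 h2 h3 h4
  ext i j
  fin_cases i <;> fin_cases j <;>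
    simp [Amap, qN, Matrix.mul_apply, Fin.sum_univ_two, Matrix.diagonal, Complex.ext_iff] <;>
    push_cast <;> (try simp only [← Complex.ofReal_pow, Complex.ofReal_re, Complex.ofReal_im]) <;>
    constructor <;>
    ring_nf <;> ring_nf at h1 h2 h3 h4 <;>
    linarith [h1, h2, h3, h4]

theorem crit (x₁ x₂ : Quaternion ℝ) (s t : ℝ) (ht : 0 ≤ t)
    (h : star x₁ * x₂ = (⟨s, -t, 0, 0⟩ : Quaternion ℝ))
    (hd : qN x₁ + qN x₂ - 2 * t = 0) : x₂ = -(x₁ * qi) := by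
  have hns : Quaternion.normSq x₁ * Quaternion.normSq x₂ = s ^ 2 + t ^ 2 := by
    rw [← Quaternion.normSq_star x₁, ← map_mul, h]
    exact (Quaternion.normSq_def' _).trans (by simp)
  rw [qN_eq, qN_eq] at hd
  set N₁ := Quaternion.normSq x₁ with hN₁
  set N₂ := Quaternion.normSq x₂ with hN₂
  have h01 : 0 ≤ N₁ := Quaternion.normSq_nonneg
  have h02 : 0 ≤ N₂ := Quaternion.normSq_nonneg
  have hNeq : N₁ = N₂ := by nlinarith [sq_nonneg s, sq_nonneg (N₁ - N₂)]
  have ht1 : t = N₁ := by nlinarith [sq_nonneg s]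
  have hs0 : s = 0 := by nlinarith [sq_nonneg s]
  by_cases h0 : N₁ = 0
  · have hx1 : x₁ = 0 := Quaternion.normSq_eq_zero.mp h0
    have hx2 : x₂ = 0 := Quaternion.normSq_eq_zero.mp (by rw [← hN₂, ← hNeq]; exact h0)
    simp [hx1, hx2]
  · have key := congrArg (x₁ * ·) h
    simp only [← mul_assoc, Quaternion.self_mul_star] at key
    have hq : (⟨s, -t, 0, 0⟩ : Quaternion ℝ) = -(N₁ : ℝ) • qi := by
      rw [hs0, ht1]
      ext <;> simp [qi_re, qi_imI, qi_imJ, qi_imK, Quaternion.re_smul]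
    rw [hq] at key
    have h2 : (N₁ : ℝ) • x₂ = (N₁ : ℝ) • (-(x₁ * qi)) := by
      rw [← Quaternion.coe_mul_eq_smul, key]; simp [mul_smul_comm]
    exact smul_right_injective (Quaternion ℝ) h0 h2

set_option maxHeartbeats 1000000 in
theorem det_zero (x₁ x₂ : Quaternion ℝ) (hx : x₂ = -(x₁ * qi)) :
    (Amap x₁ + Complex.I • Amap x₂).det = 0 := by
  subst hx
  rw [Matrix.det_fin_two]
  simp [Amap, qi_re, qi_imI, qi_imJ, qi_imK, Quaternion.re_mul, Quaternion.imI_mul, Quaternion.imJ_mul, Quaternion.imK_mul,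
    Complex.ext_iff]

/-- if `x̄₁x₂ = s − t·i` with s, t real and t ≥ 0, then
`A(x₁) + √−1·A(x₂)` is invertible iff `x₂ ≠ −x₁·i`; one always has
`(A(x̄₁) − √−1·A(x̄₂))·(A(x₁) + √−1·A(x₂)) = diag(N(x₁)+N(x₂)+2t, N(x₁)+N(x₂)−2t)`;
and when `x₂ ≠ −x₁·i`,
`(A(x₁)+√−1·A(x₂))⁻¹ = diag((N(x₁)+N(x₂)+2t)⁻¹, (N(x₁)+N(x₂)−2t)⁻¹)·(A(x̄₁) − √−1·A(x̄₂))`. -/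
theorem stmt5 (x₁ x₂ : Quaternion ℝ) (s t : ℝ) (ht : 0 ≤ t)
    (h : star x₁ * x₂ = (⟨s, -t, 0, 0⟩ : Quaternion ℝ)) :
    (IsUnit (Amap x₁ + Complex.I • Amap x₂) ↔ x₂ ≠ -(x₁ * qi)) ∧
    (Amap (star x₁) - Complex.I • Amap (star x₂)) * (Amap x₁ + Complex.I • Amap x₂)
      = Matrix.diagonal ![((qN x₁ + qN x₂ + 2 * t : ℝ) : ℂ), ((qN x₁ + qN x₂ - 2 * t : ℝ) : ℂ)] ∧
    (x₂ ≠ -(x₁ * qi) →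
      (Amap x₁ + Complex.I • Amap x₂)⁻¹
        = Matrix.diagonal ![(((qN x₁ + qN x₂ + 2 * t : ℝ) : ℂ))⁻¹,
            (((qN x₁ + qN x₂ - 2 * t : ℝ) : ℂ))⁻¹]
          * (Amap (star x₁) - Complex.I • Amap (star x₂))) := by
  have hk := key_prod x₁ x₂ s t h
  have hdm : ∀ hne : x₂ ≠ -(x₁ * qi),
      (qN x₁ + qN x₂ - 2 * t ≠ 0) ∧ (qN x₁ + qN x₂ + 2 * t ≠ 0) := by
    intro hne
    have hd : qN x₁ + qN x₂ - 2 * t ≠ 0 := fun h0 => hne (crit x₁ x₂ s t ht h h0)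
    refine ⟨hd, fun h0 => ?_⟩
    have h1 := qN_nonneg x₁
    have h2 := qN_nonneg x₂
    exact hd (by linarith)
  have hinv : ∀ hne : x₂ ≠ -(x₁ * qi),
      (Matrix.diagonal ![(((qN x₁ + qN x₂ + 2 * t : ℝ) : ℂ))⁻¹,
          (((qN x₁ + qN x₂ - 2 * t : ℝ) : ℂ))⁻¹]
        * (Amap (star x₁) - Complex.I • Amap (star x₂)))
        * (Amap x₁ + Complex.I • Amap x₂) = 1 := by
    intro hne
    obtain ⟨hd, hp⟩ := hdm hne
    rw [mul_assoc, hk, Matrix.diagonal_mul_diagonal]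
    have e0 : (((qN x₁ + qN x₂ + 2 * t : ℝ)) : ℂ) ≠ 0 := by exact_mod_cast hp
    have e1 : (((qN x₁ + qN x₂ - 2 * t : ℝ)) : ℂ) ≠ 0 := by exact_mod_cast hd
    have e0' := inv_mul_cancel₀ e0
    have e1' := inv_mul_cancel₀ e1
    push_cast at e0' e1'
    ext i j
    fin_cases i <;> fin_cases j <;>
      simp [Matrix.diagonal, Matrix.one_apply, e0', e1']
  refine ⟨⟨fun hu hx => ?_, fun hne => ?_⟩, hk, fun hne => Matrix.inv_eq_left_inv (hinv hne)⟩
  · rw [Matrix.isUnit_iff_isUnit_det, det_zero x₁ x₂ hx] at hu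
    exact hu.ne_zero rfl
  · exact (Matrix.isUnit_iff_isUnit_det _).mpr (Matrix.isUnit_det_of_left_inverse (hinv hne))
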